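/- arXiv:math/0612571 — 3 statements merged into one kernel-verified Lean document; each statement's English description precedes it below -/
import Mathlib

section
/- Let q ≥ 2 be a real number and let c be a real number with 0 < c < 3/4. Then there exists ε > 0 such that for every real s with q < s < q + ε one has 3(4s − 4q − c(2q − 2)) / (2c(6s − 6q − 2c + 2cq)) < − s(2q − 2)/(s² − q). -/
/-- For the product surface X = C×C polarised by l_s = s f + δ′, the quotient slope of
the diagonal curve is less than the slope of X for s close to q from above:
3(4s − 4q − c(2q − 2)) / (2c(6s − 6q − 2c + 2cq)) < − s(2q − 2)/(s² − q). -/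
theorem unstable_product_slope_inequality (q c : ℝ) (hq : 2 ≤ q)
    (hc0 : 0 < c) (hc1 : c < 3 / 4) :
    ∃ ε > 0, ∀ s : ℝ, q < s → s < q + ε →
      3 * (4 * s - 4 * q - c * (2 * q - 2)) /
          (2 * c * (6 * s - 6 * q - 2 * c + 2 * c * q)) <
        - (s * (2 * q - 2)) / (s ^ 2 - q) := by
  set f : ℝ → ℝ := fun s =>
    3 * (4 * s - 4 * q - c * (2 * q - 2)) /
        (2 * c * (6 * s - 6 * q - 2 * c + 2 * c * q)) +
      s * (2 * q - 2) / (s ^ 2 - q) with hf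
  have hd1 : 2 * c * (6 * q - 6 * q - 2 * c + 2 * c * q) ≠ 0 := by
    have h : 2 * c * (6 * q - 6 * q - 2 * c + 2 * c * q) = 4 * c ^ 2 * (q - 1) := by ring
    rw [h]
    have hc2 : (0:ℝ) < c ^ 2 := by positivity
    nlinarith
  have hd2 : q ^ 2 - q ≠ 0 := by nlinarith
  have hcont : ContinuousAt f q := by
    apply ContinuousAt.add
    · exact ContinuousAt.div (by fun_prop) (by fun_prop) hd1
    · exact ContinuousAt.div (by fun_prop) (by fun_prop) hd2
  have hfq : f q < 0 := by
    have h2c : (2 * c : ℝ) ≠ 0 := by positivity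
    have t1 : 3 * (4 * q - 4 * q - c * (2 * q - 2)) /
        (2 * c * (6 * q - 6 * q - 2 * c + 2 * c * q)) = -3 / (2 * c) := by
      rw [div_eq_div_iff hd1 h2c]; ring
    have t2 : q * (2 * q - 2) / (q ^ 2 - q) = 2 := by
      rw [div_eq_iff hd2]; ring
    have h3 : 2 < 3 / (2 * c) := by
      rw [lt_div_iff₀ (by linarith)]; linarith
    simp only [hf]
    rw [t1, t2, neg_div]
    linarith
  have hev : ∀ᶠ s in nhds q, f s < 0 :=
    hcont.eventually_lt continuousAt_const hfq
  rw [Metric.eventually_nhds_iff] at hev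
  obtain ⟨ε, hε, hball⟩ := hev
  refine ⟨ε, hε, fun s hs1 hs2 => ?_⟩
  have hdist : dist s q < ε := by
    rw [Real.dist_eq, abs_of_pos (by linarith)]
    linarith
  have := hball hdist
  simp only [hf] at this
  have hng : -(s * (2 * q - 2)) / (s ^ 2 - q) = -(s * (2 * q - 2) / (s ^ 2 - q)) := by
    rw [neg_div]
  rw [hng]
  linarith
end

section
/- Let q, k, G, r be real numbers with k ≥ 3, (k − 1)² < q, G ≥ 1, and r ≥ 2, and set t₀ = q/(k−1). Then there exists ε > 0 such that for every real t with t₀ ≤ t < t₀ + ε one has (r−1)((t+1)G + q − 1) / (r(t² − q)) < 3(r−1)(kG + q − 1) / (2r(3t(k−1) − (k−1)² − 2q)). -/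
/-- Comparison of the correction terms in Theorem 5.5: for t near t₀ = q/(k−1) from above,
(r−1)((t+1)G + q − 1)/(r(t² − q)) < 3(r−1)(kG + q − 1)/(2r(3t(k−1) − (k−1)² − 2q)). -/
theorem kodaira_correction_comparison (q k G r : ℝ) (hk : 3 ≤ k)
    (hq : (k - 1) ^ 2 < q) (hG : 1 ≤ G) (hr : 2 ≤ r) :
    ∃ ε > 0, ∀ t : ℝ, q / (k - 1) ≤ t → t < q / (k - 1) + ε →
      (r - 1) * ((t + 1) * G + q - 1) / (r * (t ^ 2 - q)) <
        3 * (r - 1) * (k * G + q - 1) /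
          (2 * r * (3 * t * (k - 1) - (k - 1) ^ 2 - 2 * q)) := by
  have hk1 : (0:ℝ) < k - 1 := by linarith
  have hq0 : (0:ℝ) < q := lt_trans (by positivity) hq
  have hr0 : (0:ℝ) < r := by linarith
  have hr1 : (0:ℝ) < r - 1 := by linarith
  set t₀ : ℝ := q / (k - 1) with ht₀def
  have ht0k : t₀ * (k - 1) = q := div_mul_cancel₀ q hk1.ne'
  have hS : (0:ℝ) < q - (k - 1) ^ 2 := by linarith
  have hD1eq : (t₀ ^ 2 - q) * (k - 1) ^ 2 = q * (q - (k - 1) ^ 2) := by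
    linear_combination (t₀ * (k - 1) + q) * ht0k
  have hD1 : 0 < t₀ ^ 2 - q := by
    nlinarith [mul_pos hq0 hS, mul_pos hk1 hk1]
  have hD2eq : 3 * t₀ * (k - 1) - (k - 1) ^ 2 - 2 * q = q - (k - 1) ^ 2 := by
    linear_combination 3 * ht0k
  set g : ℝ → ℝ := fun t =>
    3 * (r - 1) * (k * G + q - 1) / (2 * r * (3 * t * (k - 1) - (k - 1) ^ 2 - 2 * q)) -
      (r - 1) * ((t + 1) * G + q - 1) / (r * (t ^ 2 - q)) with hg
  have hne2 : 2 * r * (3 * t₀ * (k - 1) - (k - 1) ^ 2 - 2 * q) ≠ 0 := by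
    rw [hD2eq]; positivity
  have hne1 : r * (t₀ ^ 2 - q) ≠ 0 := by positivity
  -- key polynomial inequality at t₀
  have key : 2 * (k - 1) ^ 2 * ((t₀ + 1) * G + q - 1) < 3 * q * (k * G + q - 1) := by
    have hkG : (k - 1) ^ 2 * t₀ = q * (k - 1) := by linear_combination (k - 1) * ht0k
    nlinarith [mul_pos hS (show (0:ℝ) < G by linarith), mul_lt_mul_of_pos_right hq (show (0:ℝ) < G by linarith),
      mul_lt_mul_of_pos_right hq (show (0:ℝ) < q - 1 by nlinarith),
      mul_pos hq0 (mul_pos (show (0:ℝ) < k by linarith) (show (0:ℝ) < G by linarith)),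
      mul_pos hq0 (show (0:ℝ) < q - 1 by nlinarith)]
  have hpos :
      (r - 1) * ((t₀ + 1) * G + q - 1) / (r * (t₀ ^ 2 - q)) <
        3 * (r - 1) * (k * G + q - 1) / (2 * r * (3 * t₀ * (k - 1) - (k - 1) ^ 2 - 2 * q)) := by
    rw [div_lt_div_iff₀ (by positivity) (by rw [hD2eq]; positivity)]
    rw [hD2eq]
    have hcross :
        (r - 1) * ((t₀ + 1) * G + q - 1) * (2 * r * (q - (k - 1) ^ 2)) * (k - 1) ^ 2 <
          3 * (r - 1) * (k * G + q - 1) * (r * (t₀ ^ 2 - q)) * (k - 1) ^ 2 := by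
      calc (r - 1) * ((t₀ + 1) * G + q - 1) * (2 * r * (q - (k - 1) ^ 2)) * (k - 1) ^ 2
          = (2 * (k - 1) ^ 2 * ((t₀ + 1) * G + q - 1)) * (r * (r - 1) * (q - (k - 1) ^ 2)) := by
            ring
        _ < (3 * q * (k * G + q - 1)) * (r * (r - 1) * (q - (k - 1) ^ 2)) :=
            mul_lt_mul_of_pos_right key (by positivity)
        _ = 3 * (r - 1) * (k * G + q - 1) * (r * (t₀ ^ 2 - q)) * (k - 1) ^ 2 := by
            linear_combination (-(3 * (r - 1) * (k * G + q - 1) * r)) * hD1eq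
    exact (mul_lt_mul_iff_of_pos_right (by positivity : (0:ℝ) < (k - 1) ^ 2)).mp hcross
  have hgt : 0 < g t₀ := by
    simp only [hg]
    linarith [hpos]
  have hc : ContinuousAt g t₀ := by
    apply ContinuousAt.sub
    · exact ContinuousAt.div continuousAt_const (by fun_prop) hne2
    · exact ContinuousAt.div (by fun_prop) (by fun_prop) hne1
  have hev : ∀ᶠ t in nhds t₀, 0 < g t := hc.eventually (eventually_gt_nhds hgt)
  rw [Metric.eventually_nhds_iff] at hev
  obtain ⟨ε, hε, h⟩ := hev
  refine ⟨ε, hε, fun t ht1 ht2 => ?_⟩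
  have hd : dist t t₀ < ε := by
    rw [Real.dist_eq, abs_of_nonneg (by linarith)]
    linarith
  have := h hd
  simp only [hg] at this
  linarith
end

section
/- Let q ≥ 2, r ≥ 2, G ≥ 1 be real numbers, and let c be a real number with 0 < c < 3q / (4rq + 2(r−1)(G−1)). Then there exists δ > 0 such that for every real s with q < s < q + δ one has 3(4s − 4q − c(2q−2)) / (2c(6s − 6q − 2c + 2cq)) − 3(r−1)(1−q) / (2r(3s − 3q − c(1−q))) < − s(2q−2)/(s² − q) − (r−1)((s−1)G − q + 1) / (r(s² − q)). -/
/-- The numerical inequality μ_c(𝒪_{D₂}) < μ(X₂) for s close to q from above,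
in the proof of Theorem 5.6. -/
theorem kodaira_diagonal_slope_inequality (q r G c : ℝ) (hq : 2 ≤ q) (hr : 2 ≤ r)
    (hG : 1 ≤ G) (hc0 : 0 < c)
    (hc1 : c < 3 * q / (4 * r * q + 2 * (r - 1) * (G - 1))) :
    ∃ δ > 0, ∀ s : ℝ, q < s → s < q + δ →
      3 * (4 * s - 4 * q - c * (2 * q - 2)) /
            (2 * c * (6 * s - 6 * q - 2 * c + 2 * c * q)) -
          3 * (r - 1) * (1 - q) / (2 * r * (3 * s - 3 * q - c * (1 - q))) <
        - (s * (2 * q - 2)) / (s ^ 2 - q) -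
          (r - 1) * ((s - 1) * G - q + 1) / (r * (s ^ 2 - q)) := by
  have hApos : 0 < 4 * r * q + 2 * (r - 1) * (G - 1) := by nlinarith
  have hcA : c * (4 * r * q + 2 * (r - 1) * (G - 1)) < 3 * q :=
    (lt_div_iff₀ hApos).mp hc1
  set F : ℝ → ℝ := fun s =>
    (- (s * (2 * q - 2)) / (s ^ 2 - q) -
      (r - 1) * ((s - 1) * G - q + 1) / (r * (s ^ 2 - q))) -
    (3 * (4 * s - 4 * q - c * (2 * q - 2)) /
        (2 * c * (6 * s - 6 * q - 2 * c + 2 * c * q)) -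
      3 * (r - 1) * (1 - q) / (2 * r * (3 * s - 3 * q - c * (1 - q)))) with hFdef
  have hd1 : (0:ℝ) < 2 * c * (6 * q - 6 * q - 2 * c + 2 * c * q) := by
    nlinarith [mul_pos hc0 hc0]
  have hd2 : (0:ℝ) < 2 * r * (3 * q - 3 * q - c * (1 - q)) := by nlinarith
  have hd3 : (0:ℝ) < q ^ 2 - q := by nlinarith
  have hd4 : (0:ℝ) < r * (q ^ 2 - q) := by nlinarith
  have hcont : ContinuousAt F q := by
    refine ContinuousAt.sub
      (ContinuousAt.sub (ContinuousAt.div (by fun_prop) (by fun_prop) hd3.ne')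
        (ContinuousAt.div (by fun_prop) (by fun_prop) hd4.ne'))
      (ContinuousAt.sub (ContinuousAt.div (by fun_prop) (by fun_prop) hd1.ne')
        (ContinuousAt.div (by fun_prop) (by fun_prop) hd2.ne'))
  have e1 : (6 * q - 6 * q - 2 * c + 2 * c * q) ≠ 0 := by nlinarith
  have e2 : (3 * q - 3 * q - c * (1 - q)) ≠ 0 := by nlinarith
  have hr0 : r ≠ 0 := by linarith
  have hq0 : q ≠ 0 := by linarith
  have hFq : 0 < F q := by
    have h1 : -(q * (2 * q - 2)) / (q ^ 2 - q) = -2 := by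
      rw [div_eq_iff hd3.ne']; ring
    have h2 : (r - 1) * ((q - 1) * G - q + 1) / (r * (q ^ 2 - q)) = (r - 1) * (G - 1) / (r * q) := by
      rw [div_eq_div_iff hd4.ne' (by positivity)]; ring
    have h3 : 3 * (4 * q - 4 * q - c * (2 * q - 2)) / (2 * c * (6 * q - 6 * q - 2 * c + 2 * c * q))
        = -3 / (2 * c) := by
      rw [div_eq_div_iff hd1.ne' (by positivity)]; ring
    have h4 : 3 * (r - 1) * (1 - q) / (2 * r * (3 * q - 3 * q - c * (1 - q)))
        = -(3 * (r - 1)) / (2 * r * c) := by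
      rw [div_eq_div_iff hd2.ne' (by positivity)]; ring
    have hFval : F q = (3 * q - c * (4 * r * q + 2 * (r - 1) * (G - 1))) / (2 * r * c * q) := by
      simp only [hFdef]
      rw [h1, h2, h3, h4]
      field_simp
      ring
    rw [hFval]
    exact div_pos (by linarith) (by positivity)
  have hev : ∀ᶠ s in nhds q, 0 < F s := hcont.eventually (eventually_gt_nhds hFq)
  rw [Metric.eventually_nhds_iff] at hev
  obtain ⟨δ, hδ, h⟩ := hev
  refine ⟨δ, hδ, fun s hs1 hs2 => ?_⟩
  have hFs : 0 < F s := h (by rw [Real.dist_eq, abs_of_pos (by linarith)]; linarith)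
  simp only [hFdef] at hFs
  linarith
end
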